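/- With notation as in the context: there is no polynomial g ∈ ℤ[x,y,z] such that simultaneously φ_U(g) ≡ x⁴ modulo I_U, φ_V(g) ≡ y⁴ modulo I_V, and φ_W(g) ≡ z⁴ modulo I_W. In other words, the global section of the structure sheaf of the logarithmic blowup given by x⁴, y⁴, z⁴ on the three charts is not in the image of Γ(X, 𝒪_X), so 𝒪_X → τ⋆𝒪_Y is not surjective for this logarithmic modification τ : Y → X. -/

import Mathlib

noncomputable section

open MvPolynomial

/-- The polynomial ring `ℤ[x,y,z]` (also used, with variables renamed, for the three
blowup charts `ℤ[x,u,v]`, `ℤ[y,s,w]`, `ℤ[z,p,q]`). -/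
abbrev P3 : Type := MvPolynomial (Fin 3) ℤ

/-- The first generator `x³z − xy²z` of the ideal `I ⊆ ℤ[x,y,z]`. -/
def g1 : P3 := X 0 ^ 3 * X 2 - X 0 * X 1 ^ 2 * X 2

/-- The second generator `xy³ − xyz²` of the ideal `I ⊆ ℤ[x,y,z]`. -/
def g2 : P3 := X 0 * X 1 ^ 3 - X 0 * X 1 * X 2 ^ 2

/-- The third generator `yz³ − x²yz` of the ideal `I ⊆ ℤ[x,y,z]`. -/
def g3 : P3 := X 1 * X 2 ^ 3 - X 0 ^ 2 * X 1 * X 2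

/-- The chart map `φ_U : ℤ[x,y,z] → ℤ[x,u,v]`, `x ↦ x`, `y ↦ x·u`, `z ↦ x·v`
(in the target, `x = X 0`, `u = X 1`, `v = X 2`). -/
def phiU : P3 →+* P3 := (aeval ![X 0, X 0 * X 1, X 0 * X 2]).toRingHom

/-- The chart map `φ_V : ℤ[x,y,z] → ℤ[y,s,w]`, `x ↦ y·s`, `y ↦ y`, `z ↦ y·w`
(in the target, `y = X 0`, `s = X 1`, `w = X 2`). -/
def phiV : P3 →+* P3 := (aeval ![X 0 * X 1, X 0, X 0 * X 2]).toRingHom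

/-- The chart map `φ_W : ℤ[x,y,z] → ℤ[z,p,q]`, `x ↦ z·p`, `y ↦ z·q`, `z ↦ z`
(in the target, `z = X 0`, `p = X 1`, `q = X 2`). -/
def phiW : P3 →+* P3 := (aeval ![X 0 * X 1, X 0 * X 2, X 0]).toRingHom

/-- The ideal `I_U = (x⁴v(1−u²), x⁴u(u²−v²), x⁴uv(v²−1))` of `ℤ[x,u,v]`, generated by the
`φ_U`-images of the generators of `I`, so that `R_U = ℤ[x,u,v]/I_U`. -/
def IU : Ideal P3 := Ideal.span {phiU g1, phiU g2, phiU g3}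

/-- The ideal `I_V = (y⁴sw(s²−1), y⁴s(1−w²), y⁴w(w²−s²))` of `ℤ[y,s,w]`, generated by the
`φ_V`-images of the generators of `I`, so that `R_V = ℤ[y,s,w]/I_V`. -/
def IV : Ideal P3 := Ideal.span {phiV g1, phiV g2, phiV g3}

/-- The ideal `I_W = (z⁴p(p²−q²), z⁴pq(q²−1), z⁴q(1−p²))` of `ℤ[z,p,q]`, generated by the
`φ_W`-images of the generators of `I`, so that `R_W = ℤ[z,p,q]/I_W`. -/
def IW : Ideal P3 := Ideal.span {phiW g1, phiW g2, phiW g3}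

/-! Auxiliary: integer-linear functionals on `P3` given by a weight on monomials. -/

def mu (w : (Fin 3 →₀ ℕ) → ℤ) : P3 →+ ℤ :=
  (Finsupp.liftAddHom (fun m => AddMonoidHom.mulLeft (w m))).comp
    (AddMonoidAlgebra.coeffAddEquiv : P3 ≃+ ((Fin 3 →₀ ℕ) →₀ ℤ)).toAddMonoidHom

lemma mu_monomial (w : (Fin 3 →₀ ℕ) → ℤ) (e : Fin 3 →₀ ℕ) (a : ℤ) :
    mu w (monomial e a) = w e * a := by
  rw [← single_eq_monomial]
  exact Finsupp.liftAddHom_apply_single (fun m => AddMonoidHom.mulLeft (w m)) e a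

/-- Exponent vector `x^k y^b z^c`. -/
def d (k b c : ℕ) : Fin 3 →₀ ℕ :=
  Finsupp.single 0 k + Finsupp.single 1 b + Finsupp.single 2 c

lemma d_apply0 (k b c : ℕ) : d k b c 0 = k := by simp [d]
lemma d_apply1 (k b c : ℕ) : d k b c 1 = b := by simp [d, Finsupp.single_apply]
lemma d_apply2 (k b c : ℕ) : d k b c 2 = c := by simp [d, Finsupp.single_apply]

lemma mono_eq (k b c : ℕ) (a : ℤ) :
    (monomial (d k b c) a : P3) = C a * X 0 ^ k * X 1 ^ b * X 2 ^ c := by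
  rw [d, C_mul_X_pow_eq_monomial, X_pow_eq_monomial, X_pow_eq_monomial,
    monomial_mul, monomial_mul, mul_one, mul_one]

/-- The three weights (one per chart). -/
def w1 (m : Fin 3 →₀ ℕ) : ℤ :=
  if m 0 = 4 ∧ m 1 % 2 = 0 ∧ m 2 % 2 = 0 ∧ (4 ≤ m 1 ∨ 2 ≤ m 2) then -1 else 0
def w2 (m : Fin 3 →₀ ℕ) : ℤ :=
  if m 0 = 4 ∧ m 1 = 0 ∧ (m 2 = 0 ∨ m 2 = 2) then 1 else 0
def w3 (m : Fin 3 →₀ ℕ) : ℤ :=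
  if m 0 = 4 ∧ m 2 = 0 ∧ (m 1 = 0 ∨ m 1 = 2) then 1 else 0

/-- If a weight takes equal values on shifts by `d1`, `d2`, then `mu w` kills all
multiples of `monomial d1 1 - monomial d2 1`. -/
lemma mu_kill (w : (Fin 3 →₀ ℕ) → ℤ) (d1 d2 : Fin 3 →₀ ℕ)
    (hw : ∀ e : Fin 3 →₀ ℕ, w (e + d1) = w (e + d2))
    {p : P3} (hp : p = monomial d1 1 - monomial d2 1) (e : Fin 3 →₀ ℕ) (a : ℤ) :
    mu w (monomial e a * p) = 0 := by
  rw [hp, mul_sub, map_sub, monomial_mul, monomial_mul, mu_monomial, mu_monomial, hw e]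
  ring

/-- `mu w` kills the whole span if it kills all multiples of the generators. -/
lemma mu_span (w : (Fin 3 →₀ ℕ) → ℤ) (p1 p2 p3 : P3)
    (h1 : ∀ e a, mu w (monomial e a * p1) = 0)
    (h2 : ∀ e a, mu w (monomial e a * p2) = 0)
    (h3 : ∀ e a, mu w (monomial e a * p3) = 0) :
    ∀ q ∈ Ideal.span {p1, p2, p3}, mu w q = 0 := by
  have mulkill : ∀ p : P3, (∀ e a, mu w (monomial e a * p) = 0) →
      ∀ h : P3, mu w (h * p) = 0 := by
    intro p hp h
    induction h using MvPolynomial.induction_on' with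
    | monomial e a => exact hp e a
    | add f g hf hg => rw [add_mul, map_add, hf, hg, add_zero]
  have key : ∀ q ∈ Ideal.span {p1, p2, p3}, ∀ h : P3, mu w (h * q) = 0 := by
    intro q hq
    induction hq using Submodule.span_induction with
    | mem x hx =>
      rcases hx with rfl | rfl | rfl
      · exact mulkill _ h1
      · exact mulkill _ h2
      · exact mulkill _ h3
    | zero => intro h; rw [mul_zero, map_zero]
    | add x y _ _ hx hy => intro h; rw [mul_add, map_add, hx h, hy h, add_zero]
    | smul r x _ hx => intro h; rw [smul_eq_mul, ← mul_assoc]; exact hx (h * r)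
  intro q hq
  simpa using key q hq 1

/-- Images of monomials under the chart maps. -/
lemma phiU_monomial (e : Fin 3 →₀ ℕ) (a : ℤ) :
    phiU (monomial e a) = monomial (d (e 0 + e 1 + e 2) (e 1) (e 2)) a := by
  rw [mono_eq]
  show (aeval ![X 0, X 0 * X 1, X 0 * X 2]) (monomial e a) = _
  rw [aeval_monomial, Finsupp.prod_pow e, Fin.prod_univ_three]
  simp only [Matrix.cons_val_zero, Matrix.cons_val_one, Matrix.head_cons,
    Matrix.cons_val_two, Matrix.tail_cons, algebraMap_eq]
  ring

lemma phiV_monomial (e : Fin 3 →₀ ℕ) (a : ℤ) :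
    phiV (monomial e a) = monomial (d (e 0 + e 1 + e 2) (e 0) (e 2)) a := by
  rw [mono_eq]
  show (aeval ![X 0 * X 1, X 0, X 0 * X 2]) (monomial e a) = _
  rw [aeval_monomial, Finsupp.prod_pow e, Fin.prod_univ_three]
  simp only [Matrix.cons_val_zero, Matrix.cons_val_one, Matrix.head_cons,
    Matrix.cons_val_two, Matrix.tail_cons, algebraMap_eq]
  ring

lemma phiW_monomial (e : Fin 3 →₀ ℕ) (a : ℤ) :
    phiW (monomial e a) = monomial (d (e 0 + e 1 + e 2) (e 0) (e 1)) a := by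
  rw [mono_eq]
  show (aeval ![X 0 * X 1, X 0 * X 2, X 0]) (monomial e a) = _
  rw [aeval_monomial, Finsupp.prod_pow e, Fin.prod_univ_three]
  simp only [Matrix.cons_val_zero, Matrix.cons_val_one, Matrix.head_cons,
    Matrix.cons_val_two, Matrix.tail_cons, algebraMap_eq]
  ring

/-- Explicit monomial expansions of the chart images of the generators. -/
lemma phiU_g1 : phiU g1 = monomial (d 4 0 1) 1 - monomial (d 4 2 1) 1 := by
  rw [mono_eq, mono_eq]
  show (aeval ![X 0, X 0 * X 1, X 0 * X 2]) g1 = _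
  simp only [g1, map_sub, map_mul, map_pow, aeval_X, Matrix.cons_val_zero,
    Matrix.cons_val_one, Matrix.head_cons, Matrix.cons_val_two, Matrix.tail_cons, map_one]
  ring

lemma phiU_g2 : phiU g2 = monomial (d 4 3 0) 1 - monomial (d 4 1 2) 1 := by
  rw [mono_eq, mono_eq]
  show (aeval ![X 0, X 0 * X 1, X 0 * X 2]) g2 = _
  simp only [g2, map_sub, map_mul, map_pow, aeval_X, Matrix.cons_val_zero,
    Matrix.cons_val_one, Matrix.head_cons, Matrix.cons_val_two, Matrix.tail_cons, map_one]
  ring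

lemma phiU_g3 : phiU g3 = monomial (d 4 1 3) 1 - monomial (d 4 1 1) 1 := by
  rw [mono_eq, mono_eq]
  show (aeval ![X 0, X 0 * X 1, X 0 * X 2]) g3 = _
  simp only [g3, map_sub, map_mul, map_pow, aeval_X, Matrix.cons_val_zero,
    Matrix.cons_val_one, Matrix.head_cons, Matrix.cons_val_two, Matrix.tail_cons, map_one]
  ring

lemma phiV_g1 : phiV g1 = monomial (d 4 3 1) 1 - monomial (d 4 1 1) 1 := by
  rw [mono_eq, mono_eq]
  show (aeval ![X 0 * X 1, X 0, X 0 * X 2]) g1 = _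
  simp only [g1, map_sub, map_mul, map_pow, aeval_X, Matrix.cons_val_zero,
    Matrix.cons_val_one, Matrix.head_cons, Matrix.cons_val_two, Matrix.tail_cons, map_one]
  ring

lemma phiV_g2 : phiV g2 = monomial (d 4 1 0) 1 - monomial (d 4 1 2) 1 := by
  rw [mono_eq, mono_eq]
  show (aeval ![X 0 * X 1, X 0, X 0 * X 2]) g2 = _
  simp only [g2, map_sub, map_mul, map_pow, aeval_X, Matrix.cons_val_zero,
    Matrix.cons_val_one, Matrix.head_cons, Matrix.cons_val_two, Matrix.tail_cons, map_one]
  ring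

lemma phiV_g3 : phiV g3 = monomial (d 4 0 3) 1 - monomial (d 4 2 1) 1 := by
  rw [mono_eq, mono_eq]
  show (aeval ![X 0 * X 1, X 0, X 0 * X 2]) g3 = _
  simp only [g3, map_sub, map_mul, map_pow, aeval_X, Matrix.cons_val_zero,
    Matrix.cons_val_one, Matrix.head_cons, Matrix.cons_val_two, Matrix.tail_cons, map_one]
  ring

lemma phiW_g1 : phiW g1 = monomial (d 4 3 0) 1 - monomial (d 4 1 2) 1 := by
  rw [mono_eq, mono_eq]
  show (aeval ![X 0 * X 1, X 0 * X 2, X 0]) g1 = _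
  simp only [g1, map_sub, map_mul, map_pow, aeval_X, Matrix.cons_val_zero,
    Matrix.cons_val_one, Matrix.head_cons, Matrix.cons_val_two, Matrix.tail_cons, map_one]
  ring

lemma phiW_g2 : phiW g2 = monomial (d 4 1 3) 1 - monomial (d 4 1 1) 1 := by
  rw [mono_eq, mono_eq]
  show (aeval ![X 0 * X 1, X 0 * X 2, X 0]) g2 = _
  simp only [g2, map_sub, map_mul, map_pow, aeval_X, Matrix.cons_val_zero,
    Matrix.cons_val_one, Matrix.head_cons, Matrix.cons_val_two, Matrix.tail_cons, map_one]
  ring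

lemma phiW_g3 : phiW g3 = monomial (d 4 0 1) 1 - monomial (d 4 2 1) 1 := by
  rw [mono_eq, mono_eq]
  show (aeval ![X 0 * X 1, X 0 * X 2, X 0]) g3 = _
  simp only [g3, map_sub, map_mul, map_pow, aeval_X, Matrix.cons_val_zero,
    Matrix.cons_val_one, Matrix.head_cons, Matrix.cons_val_two, Matrix.tail_cons, map_one]
  ring

/-- Weight-shift identities (the weights annihilate the chart ideals). -/
lemma w_shift (w : (Fin 3 →₀ ℕ) → ℤ) (k1 b1 c1 k2 b2 c2 : ℕ)
    (h : ∀ n0 n1 n2 : ℕ, w (d (n0 + k1) (n1 + b1) (n2 + c1))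
        = w (d (n0 + k2) (n1 + b2) (n2 + c2))) :
    ∀ e : Fin 3 →₀ ℕ, w (e + d k1 b1 c1) = w (e + d k2 b2 c2) := by
  intro e
  have he : ∀ k b c : ℕ, e + d k b c = d (e 0 + k) (e 1 + b) (e 2 + c) := by
    intro k b c
    ext i
    fin_cases i <;>
      simp [d, Finsupp.single_apply]
  rw [he, he, h]

lemma w1_apply (k b c : ℕ) :
    w1 (d k b c) = if k = 4 ∧ b % 2 = 0 ∧ c % 2 = 0 ∧ (4 ≤ b ∨ 2 ≤ c) then -1 else 0 := by
  rw [w1, d_apply0, d_apply1, d_apply2]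

lemma w2_apply (k b c : ℕ) :
    w2 (d k b c) = if k = 4 ∧ b = 0 ∧ (c = 0 ∨ c = 2) then 1 else 0 := by
  rw [w2, d_apply0, d_apply1, d_apply2]

lemma w3_apply (k b c : ℕ) :
    w3 (d k b c) = if k = 4 ∧ c = 0 ∧ (b = 0 ∨ b = 2) then 1 else 0 := by
  rw [w3, d_apply0, d_apply1, d_apply2]

lemma muU_span : ∀ q ∈ IU, mu w1 q = 0 := by
  refine mu_span w1 _ _ _ ?_ ?_ ?_
  · exact fun e a => mu_kill w1 (d 4 0 1) (d 4 2 1)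
      (w_shift w1 4 0 1 4 2 1 (fun n0 n1 n2 => by
        rw [w1_apply, w1_apply]; split_ifs <;> first | rfl | omega | simp_all)) phiU_g1 e a
  · exact fun e a => mu_kill w1 (d 4 3 0) (d 4 1 2)
      (w_shift w1 4 3 0 4 1 2 (fun n0 n1 n2 => by
        rw [w1_apply, w1_apply]; split_ifs <;> first | rfl | omega | simp_all)) phiU_g2 e a
  · exact fun e a => mu_kill w1 (d 4 1 3) (d 4 1 1)
      (w_shift w1 4 1 3 4 1 1 (fun n0 n1 n2 => by
        rw [w1_apply, w1_apply]; split_ifs <;> first | rfl | omega | simp_all)) phiU_g3 e a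

lemma muV_span : ∀ q ∈ IV, mu w2 q = 0 := by
  refine mu_span w2 _ _ _ ?_ ?_ ?_
  · exact fun e a => mu_kill w2 (d 4 3 1) (d 4 1 1)
      (w_shift w2 4 3 1 4 1 1 (fun n0 n1 n2 => by
        rw [w2_apply, w2_apply]; split_ifs <;> first | rfl | omega | simp_all)) phiV_g1 e a
  · exact fun e a => mu_kill w2 (d 4 1 0) (d 4 1 2)
      (w_shift w2 4 1 0 4 1 2 (fun n0 n1 n2 => by
        rw [w2_apply, w2_apply]; split_ifs <;> first | rfl | omega | simp_all)) phiV_g2 e a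
  · exact fun e a => mu_kill w2 (d 4 0 3) (d 4 2 1)
      (w_shift w2 4 0 3 4 2 1 (fun n0 n1 n2 => by
        rw [w2_apply, w2_apply]; split_ifs <;> first | rfl | omega | simp_all)) phiV_g3 e a

lemma muW_span : ∀ q ∈ IW, mu w3 q = 0 := by
  refine mu_span w3 _ _ _ ?_ ?_ ?_
  · exact fun e a => mu_kill w3 (d 4 3 0) (d 4 1 2)
      (w_shift w3 4 3 0 4 1 2 (fun n0 n1 n2 => by
        rw [w3_apply, w3_apply]; split_ifs <;> first | rfl | omega | simp_all)) phiW_g1 e a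
  · exact fun e a => mu_kill w3 (d 4 1 3) (d 4 1 1)
      (w_shift w3 4 1 3 4 1 1 (fun n0 n1 n2 => by
        rw [w3_apply, w3_apply]; split_ifs <;> first | rfl | omega | simp_all)) phiW_g2 e a
  · exact fun e a => mu_kill w3 (d 4 0 1) (d 4 2 1)
      (w_shift w3 4 0 1 4 2 1 (fun n0 n1 n2 => by
        rw [w3_apply, w3_apply]; split_ifs <;> first | rfl | omega | simp_all)) phiW_g3 e a

/-- The key global linear relation: the three functionals sum to zero on any global `g`. -/
lemma mu_sum_zero (g : P3) :
    mu w1 (phiU g) + mu w2 (phiV g) + mu w3 (phiW g) = 0 := by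
  induction g using MvPolynomial.induction_on' with
  | add p q hp hq =>
    rw [map_add, map_add, map_add, map_add, map_add, map_add]
    linarith
  | monomial e a =>
    rw [phiU_monomial, phiV_monomial, phiW_monomial,
      mu_monomial, mu_monomial, mu_monomial, ← add_mul, ← add_mul]
    have : w1 (d (e 0 + e 1 + e 2) (e 1) (e 2)) + w2 (d (e 0 + e 1 + e 2) (e 0) (e 2))
        + w3 (d (e 0 + e 1 + e 2) (e 0) (e 1)) = 0 := by
      rw [w1_apply, w2_apply, w3_apply]
      split_ifs <;> first | rfl | omega | simp_all
    rw [this, zero_mul]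

lemma x4_eq : (X 0 ^ 4 : P3) = monomial (d 4 0 0) 1 := by
  rw [mono_eq]; simp

/-- There is no polynomial `g ∈ ℤ[x,y,z]` such that simultaneously `φ_U(g) ≡ x⁴ mod I_U`,
`φ_V(g) ≡ y⁴ mod I_V`, and `φ_W(g) ≡ z⁴ mod I_W`: the global section of the structure sheaf
of the logarithmic blowup given by `x⁴`, `y⁴`, `z⁴` on the three charts is not in the image
of `Γ(X, 𝒪_X)`, so `𝒪_X → τ⋆𝒪_Y` is not surjective.  (In each chart the relevant fourth
power is that of the first variable, `X 0`.) -/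
theorem no_global_preimage :
    ¬ ∃ g : P3,
      Ideal.Quotient.mk IU (phiU g) = Ideal.Quotient.mk IU (X 0 ^ 4) ∧
      Ideal.Quotient.mk IV (phiV g) = Ideal.Quotient.mk IV (X 0 ^ 4) ∧
      Ideal.Quotient.mk IW (phiW g) = Ideal.Quotient.mk IW (X 0 ^ 4) := by
  rintro ⟨g, hU, hV, hW⟩
  rw [Ideal.Quotient.eq] at hU hV hW
  have mU : mu w1 (phiU g) = mu w1 (X 0 ^ 4) := by
    have := muU_span _ hU
    rw [map_sub] at this; linarith
  have mV : mu w2 (phiV g) = mu w2 (X 0 ^ 4) := by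
    have := muV_span _ hV
    rw [map_sub] at this; linarith
  have mW : mu w3 (phiW g) = mu w3 (X 0 ^ 4) := by
    have := muW_span _ hW
    rw [map_sub] at this; linarith
  have hsum := mu_sum_zero g
  rw [mU, mV, mW, x4_eq, mu_monomial, mu_monomial, mu_monomial,
    w1_apply, w2_apply, w3_apply] at hsum
  norm_num at hsum


end
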